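/- Let n ≥ 4 and let ε : ℤ/n → {−1, +1} be a sign assignment such that the number of indices i with ε_i = +1 is odd. Then the cycle quasi-Cartan matrix C(ε) is positive definite. -/

import Mathlib

open Matrix

/-- `A` is positive definite: `xᵀ·A·x > 0` for every nonzero integer vector `x`. -/
def PosDefInt {V : Type*} [Fintype V] (A : Matrix V V ℤ) : Prop :=
  ∀ x : V → ℤ, x ≠ 0 → 0 < x ⬝ᵥ (A *ᵥ x)

/-- The cycle quasi-Cartan matrix `C(ε)`:  indexed by `ℤ/n` (realized as `Fin n` with
cyclic successor `i ↦ (i+1) % n`), diagonal entries `2`, entries `C(ε)_{i,i+1} =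
C(ε)_{i+1,i} = ε i`, and `0` elsewhere. -/
def CycM (n : ℕ) (ε : Fin n → ℤ) : Matrix (Fin n) (Fin n) ℤ :=
  fun i j =>
    if i = j then 2
    else if (j : ℕ) = ((i : ℕ) + 1) % n then ε i
    else if (i : ℕ) = ((j : ℕ) + 1) % n then ε j
    else 0

section aux
variable {n : ℕ} [NeZero n]

lemma myval_one (hn : 2 ≤ n) : ((1 : Fin n) : ℕ) = 1 := by
  rw [Fin.val_one']; exact Nat.mod_eq_of_lt (by omega)

lemma myval_add_one (hn : 2 ≤ n) (i : Fin n) : ((i + 1 : Fin n) : ℕ) = ((i : ℕ) + 1) % n := by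
  rw [Fin.val_add, myval_one hn]

lemma succ_iff (hn : 2 ≤ n) (i j : Fin n) : (j : ℕ) = ((i : ℕ) + 1) % n ↔ j = i + 1 := by
  rw [Fin.ext_iff, myval_add_one hn]

lemma my_one_ne (hn : 2 ≤ n) : (1 : Fin n) ≠ 0 := by
  intro h
  have := congrArg Fin.val h
  rw [myval_one hn] at this
  simp at this

lemma my_two_ne (hn : 3 ≤ n) : (1 + 1 : Fin n) ≠ 0 := by
  intro h
  have := congrArg Fin.val h
  rw [myval_add_one (by omega), myval_one (by omega), Nat.mod_eq_of_lt (by omega)] at this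
  simp at this

lemma cycM_eq (hn : 3 ≤ n) (ε : Fin n → ℤ) (i j : Fin n) :
    CycM n ε i j = (if j = i then 2 else 0) + (if j = i + 1 then ε i else 0)
      + (if j = i - 1 then ε (i - 1) else 0) := by
  have h2 : (2 : ℕ) ≤ n := by omega
  have c1 : ((j : ℕ) = ((i : ℕ) + 1) % n) = (j = i + 1) := by rw [succ_iff h2]
  have c2 : ((i : ℕ) = ((j : ℕ) + 1) % n) = (j = i - 1) := by
    rw [succ_iff h2]
    simp only [eq_sub_iff_add_eq, eq_comm]
  have d1 : i + 1 ≠ i := by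
    intro h; exact my_one_ne h2 (by linear_combination (norm := abel) h)
  have d2 : i - 1 ≠ i := by
    intro h; exact my_one_ne h2 (by linear_combination (norm := abel) -h)
  have d3 : i + 1 ≠ i - 1 := by
    intro h; exact my_two_ne hn (by linear_combination (norm := abel) h)
  unfold CycM
  simp only [c1, c2]
  by_cases e1 : j = i
  · subst e1
    rw [if_pos rfl, if_pos rfl, if_neg (fun h => d1 h.symm), if_neg (fun h => d2 h.symm)]
    ring
  · by_cases e2 : j = i + 1
    · subst e2
      rw [if_neg (fun h => d1 h.symm), if_pos rfl, if_neg d1, if_pos rfl, if_neg d3]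
      ring
    · by_cases e3 : j = i - 1
      · subst e3
        rw [if_neg (fun h => d2 h.symm), if_neg (fun h => d3 h.symm), if_pos rfl,
          if_neg d2, if_neg (fun h => d3 h.symm)]
        ring
      · rw [if_neg (fun h => e1 h.symm), if_neg e2, if_neg e3, if_neg e1, if_neg e2, if_neg e3]
        ring

end aux

section aux2
variable {n : ℕ} [NeZero n]

lemma form_eq (hn : 3 ≤ n) (ε : Fin n → ℤ) (hε : ∀ i, ε i = 1 ∨ ε i = -1) (x : Fin n → ℤ) :
    x ⬝ᵥ (CycM n ε *ᵥ x) = ∑ i : Fin n, (x i + ε i * x (i + 1)) ^ 2 := by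
  have hsq : ∀ i, ε i * ε i = 1 := fun i => by rcases hε i with h | h <;> rw [h] <;> ring
  have step : x ⬝ᵥ (CycM n ε *ᵥ x)
      = ∑ i : Fin n, (2 * (x i * x i) + ε i * (x i * x (i + 1)) + ε (i - 1) * (x i * x (i - 1))) := by
    simp only [dotProduct, mulVec, cycM_eq hn, add_mul, Finset.sum_add_distrib, ite_mul, zero_mul,
      Finset.sum_ite_eq' Finset.univ, Finset.mem_univ, if_true]
    rw [← Finset.sum_add_distrib, ← Finset.sum_add_distrib]
    exact Finset.sum_congr rfl fun i _ => by ring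
  rw [step, Finset.sum_add_distrib, Finset.sum_add_distrib]
  have R : ∑ i : Fin n, (x i + ε i * x (i + 1)) ^ 2
      = (∑ i : Fin n, x i * x i) + (∑ i : Fin n, 2 * (ε i * (x i * x (i + 1))))
        + ∑ i : Fin n, x (i + 1) * x (i + 1) := by
    rw [← Finset.sum_add_distrib, ← Finset.sum_add_distrib]
    exact Finset.sum_congr rfl fun i _ => by
      linear_combination (x (i + 1) * x (i + 1)) * hsq i
  rw [R]
  have e3 : ∑ i : Fin n, ε (i - 1) * (x i * x (i - 1)) = ∑ i : Fin n, ε i * (x (i + 1) * x i) := by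
    apply Fintype.sum_equiv (Equiv.subRight (1 : Fin n))
    intro i; simp
  have e2 : ∑ i : Fin n, x (i + 1) * x (i + 1) = ∑ i : Fin n, x i * x i := by
    apply Fintype.sum_equiv (Equiv.addRight (1 : Fin n))
    intro i; simp
  rw [e3, e2]
  have t2 : ∑ i : Fin n, ε i * (x (i + 1) * x i) = ∑ i : Fin n, ε i * (x i * x (i + 1)) :=
    Finset.sum_congr rfl fun i _ => by ring
  rw [t2, ← Finset.mul_sum, ← Finset.mul_sum]
  ring

end aux2

open Fin.NatCast in
theorem stmt19aux (n : ℕ) (hn : 4 ≤ n) (ε : Fin n → ℤ)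
    (hε : ∀ i, ε i = 1 ∨ ε i = -1)
    (hodd : Odd (Finset.univ.filter fun i => ε i = 1).card) :
    ∀ x : Fin n → ℤ, x ≠ 0 → 0 < x ⬝ᵥ (CycM n ε *ᵥ x) := by
  haveI : NeZero n := ⟨by omega⟩
  have hsq : ∀ i, ε i * ε i = 1 := fun i => by rcases hε i with h | h <;> rw [h] <;> ring
  intro x hx
  rw [form_eq (by omega) ε hε x]
  by_contra hle
  push_neg at hle
  have hnn : ∀ i ∈ Finset.univ, (0:ℤ) ≤ (x i + ε i * x (i + 1)) ^ 2 := fun i _ => sq_nonneg _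
  have hzero : ∀ i ∈ Finset.univ, (x i + ε i * x (i + 1)) ^ 2 = 0 :=
    (Finset.sum_eq_zero_iff_of_nonneg hnn).1 (le_antisymm hle (Finset.sum_nonneg hnn))
  have h0 : ∀ i : Fin n, x i + ε i * x (i + 1) = 0 := fun i =>
    pow_eq_zero_iff (two_ne_zero) |>.1 (hzero i (Finset.mem_univ i))
  have hrec : ∀ i : Fin n, x (i + 1) = -ε i * x i := fun i => by
    linear_combination (ε i) * h0 i - (x (i + 1)) * hsq i
  have key : ∀ m : ℕ, x ((m : Fin n)) = (∏ k ∈ Finset.range m, (-ε ((k : Fin n)))) * x 0 := by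
    intro m
    induction m with
    | zero => simp
    | succ m ih =>
        have hc : ((m + 1 : ℕ) : Fin n) = (m : Fin n) + 1 := by push_cast; ring
        rw [hc, hrec, ih, Finset.prod_range_succ]
        ring
  -- the full product around the cycle is -1
  set k := (Finset.univ.filter fun i => ε i = 1).card with hk
  have hkn : k ≤ n := by
    rw [hk]
    exact (Finset.card_filter_le _ _).trans (by simp)
  have hprod : (∏ j : Fin n, (-ε j)) = -1 := by
    have h1 : (∏ j : Fin n, (-ε j)) = (-1 : ℤ) ^ n * ∏ j : Fin n, ε j := by
      calc (∏ j : Fin n, (-ε j)) = ∏ j : Fin n, ((-1 : ℤ) * ε j) := by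
            exact Finset.prod_congr rfl fun j _ => (neg_one_mul _).symm
        _ = (∏ _j : Fin n, (-1 : ℤ)) * ∏ j : Fin n, ε j := Finset.prod_mul_distrib
        _ = (-1 : ℤ) ^ n * ∏ j : Fin n, ε j := by simp
    have h2 : (∏ j : Fin n, ε j) = (-1 : ℤ) ^ (n - k) := by
      rw [← Finset.prod_filter_mul_prod_filter_not Finset.univ (fun i => ε i = 1) ε]
      have ha : (∏ j ∈ Finset.univ.filter (fun i => ε i = 1), ε j) = 1 :=
        Finset.prod_eq_one fun i hi => (Finset.mem_filter.1 hi).2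
      have hb : (∏ j ∈ Finset.univ.filter (fun i => ¬ ε i = 1), ε j) = (-1 : ℤ) ^ (n - k) := by
        rw [Finset.prod_congr rfl (fun i hi => ?_), Finset.prod_const]
        · congr 1
          have := Finset.card_filter_add_card_filter_not (s := Finset.univ)
            (p := fun i : Fin n => ε i = 1)
          simp only [Finset.card_univ, Fintype.card_fin] at this
          omega
        · rcases hε i with h | h
          · exact absurd h (Finset.mem_filter.1 hi).2
          · exact h
      rw [ha, hb, one_mul]
    rw [h1, h2, ← pow_add]
    have : Odd (n + (n - k)) := by
      rw [Nat.odd_iff] at hodd ⊢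
      omega
    exact this.neg_one_pow
  have hx0 : x 0 = 0 := by
    have := key n
    rw [Fin.natCast_self] at this
    have hp : (∏ k ∈ Finset.range n, (-ε ((k : Fin n)))) = ∏ j : Fin n, (-ε j) := by
      rw [← Fin.prod_univ_eq_prod_range (fun k => -ε ((k : Fin n))) n]
      exact Finset.prod_congr rfl fun j _ => by rw [Fin.cast_val_eq_self]
    rw [hp, hprod] at this
    linarith
  apply hx
  funext j
  have := key j.val
  rw [Fin.cast_val_eq_self, hx0, mul_zero] at this
  simpa using this

theorem stmt19 (n : ℕ) (hn : 4 ≤ n) (ε : Fin n → ℤ)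
    (hε : ∀ i, ε i = 1 ∨ ε i = -1)
    (hodd : Odd (Finset.univ.filter fun i => ε i = 1).card) :
    PosDefInt (CycM n ε) := by
  exact stmt19aux n hn ε hε hodd
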